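/- Let p ≥ 1 and let f, g : [a,b] → ℝ be two positive functions with 0 < ∫_a^b f(t)^p dt < ∞ and 0 < ∫_a^b g(t)^p dt < ∞. If there exist real constants 0 < m ≤ M such that m ≤ f(t)/g(t) ≤ M for all t ∈ [a,b], then (∫_a^b f(t)^p dt)^(2/p) + (∫_a^b g(t)^p dt)^(2/p) ≥ c₂ · (∫_a^b f(t)^p dt)^(1/p) · (∫_a^b g(t)^p dt)^(1/p), where c₂ = (M+1)(m+1)/M − 2. -/

import Mathlib

open MeasureTheory

/-- Companion to the reverse Minkowski inequality for the classical integral. -/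
theorem reverse_minkowski_companion_classical
    (a b p m M : ℝ) (hab : a < b) (hp : 1 ≤ p)
    (f g : ℝ → ℝ)
    (hf_pos : ∀ t ∈ Set.Icc a b, 0 < f t)
    (hg_pos : ∀ t ∈ Set.Icc a b, 0 < g t)
    (hf_int : IntervalIntegrable (fun t => f t ^ p) volume a b)
    (hg_int : IntervalIntegrable (fun t => g t ^ p) volume a b)
    (hf_pos_int : 0 < ∫ t in a..b, f t ^ p)
    (hg_pos_int : 0 < ∫ t in a..b, g t ^ p)
    (hm : 0 < m) (hmM : m ≤ M)
    (hbound : ∀ t ∈ Set.Icc a b, m ≤ f t / g t ∧ f t / g t ≤ M) :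
    ((M + 1) * (m + 1) / M - 2) *
        ((∫ t in a..b, f t ^ p) ^ (1 / p) * (∫ t in a..b, g t ^ p) ^ (1 / p)) ≤
      (∫ t in a..b, f t ^ p) ^ (2 / p) + (∫ t in a..b, g t ^ p) ^ (2 / p) := by
  have hM : 0 < M := lt_of_lt_of_le hm hmM
  have hp0 : (0:ℝ) < p := lt_of_lt_of_le one_pos hp
  set F := ∫ t in a..b, f t ^ p with hF
  set G := ∫ t in a..b, g t ^ p with hG
  -- pointwise bounds
  have h1 : ∀ t ∈ Set.Icc a b, m ^ p * g t ^ p ≤ f t ^ p := by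
    intro t ht
    have hg := hg_pos t ht
    have : m * g t ≤ f t := (le_div_iff₀ hg).mp (hbound t ht).1
    calc m ^ p * g t ^ p = (m * g t) ^ p := (Real.mul_rpow hm.le hg.le).symm
    _ ≤ f t ^ p := Real.rpow_le_rpow (by positivity) this hp0.le
  have h2 : ∀ t ∈ Set.Icc a b, f t ^ p ≤ M ^ p * g t ^ p := by
    intro t ht
    have hg := hg_pos t ht
    have : f t ≤ M * g t := (div_le_iff₀ hg).mp (hbound t ht).2
    calc f t ^ p ≤ (M * g t) ^ p :=
      Real.rpow_le_rpow (hf_pos t ht).le this hp0.le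
    _ = M ^ p * g t ^ p := Real.mul_rpow hM.le hg.le
  have hint1 : m ^ p * G ≤ F := by
    rw [hF, hG, ← intervalIntegral.integral_const_mul]
    exact intervalIntegral.integral_mono_on hab.le (hg_int.const_mul _) hf_int h1
  have hint2 : F ≤ M ^ p * G := by
    rw [hF, hG, ← intervalIntegral.integral_const_mul]
    exact intervalIntegral.integral_mono_on hab.le hf_int (hg_int.const_mul _) h2
  set A := F ^ (1/p) with hA
  set B := G ^ (1/p) with hB
  have hApos : 0 < A := Real.rpow_pos_of_pos hf_pos_int _
  have hBpos : 0 < B := Real.rpow_pos_of_pos hg_pos_int _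
  have hmp : (m ^ p) ^ (1/p) = m := by
    rw [← Real.rpow_mul hm.le, mul_one_div, div_self hp0.ne', Real.rpow_one]
  have hAB1 : m * B ≤ A := by
    have := Real.rpow_le_rpow (by positivity) hint1 (by positivity : (0:ℝ) ≤ 1/p)
    rwa [Real.mul_rpow (by positivity) hg_pos_int.le, hmp] at this
  have hAB2 : A ≤ M * B := by
    have := Real.rpow_le_rpow hf_pos_int.le hint2 (by positivity : (0:ℝ) ≤ 1/p)
    have hMp : (M ^ p) ^ (1/p) = M := by
      rw [← Real.rpow_mul hM.le, mul_one_div, div_self hp0.ne', Real.rpow_one]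
    rwa [Real.mul_rpow (by positivity) hg_pos_int.le, hMp] at this
  have hF2 : F ^ (2/p) = A ^ 2 := by
    rw [hA, show (2:ℝ)/p = (1/p)*2 by ring, Real.rpow_mul hf_pos_int.le,
      show (2:ℝ) = ((2:ℕ):ℝ) by norm_num, Real.rpow_natCast]
  have hG2 : G ^ (2/p) = B ^ 2 := by
    rw [hB, show (2:ℝ)/p = (1/p)*2 by ring, Real.rpow_mul hg_pos_int.le,
      show (2:ℝ) = ((2:ℕ):ℝ) by norm_num, Real.rpow_natCast]
  rw [hF2, hG2, div_sub' hM.ne', div_mul_eq_mul_div, div_le_iff₀ hM]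
  nlinarith [mul_nonneg (sub_nonneg.mpr hAB1) (sub_nonneg.mpr hAB2),
    sq_nonneg (A - m*B), sq_nonneg (M*B - A), mul_pos hApos hBpos,
    mul_nonneg (sub_nonneg.mpr hmM) hBpos.le]
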